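/- Let p ≥ 2, let r_1, …, r_p > 0 and d_1, …, d_p ∈ ℝ be such that ν_j := d_j/r_j satisfy ν_1 < ν_2 < ⋯ < ν_p. Set R := Σ_j r_j, D := Σ_j d_j, and ν := D/R. Then for every w ∈ ℝ^p with w ≠ 0, Σ_j w_j (R d_j − D r_j) / √(Σ_j w_j² r_j) ≤ R·√(Σ_j ν_j² r_j − ν² R), with equality if and only if w is a positive scalar multiple of the vector (ν_1 − ν, ν_2 − ν, …, ν_p − ν); in particular the maximizing weight vector is strictly increasing, and the maximum value of the left-hand side over all nonzero w equals R·√(Σ_j ν_j² r_j − ν² R). -/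

import Mathlib

open scoped RealInnerProductSpace

/-- Explicit maximum of the numerical invariant over the weights of a filtration with
strictly increasing slopes: for ranks `r j > 0` and degrees `d j` with slopes
`ν j = d j / r j` strictly increasing, the quantity
`(∑ⱼ wⱼ (R dⱼ − D rⱼ)) / √(∑ⱼ wⱼ² rⱼ)` over nonzero weight vectors `w` is maximized
exactly by the positive multiples of `(ν₁ − ν, …, ν_p − ν)` (where `R = ∑ rⱼ`, `D = ∑ dⱼ`,
`ν = D / R`), which is a strictly increasing weight vector, and the maximal value is
`R √(∑ νⱼ² rⱼ − ν² R)`. -/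
theorem explicit_maximum_of_numerical_invariant {p : ℕ} (hp : 2 ≤ p)
    (r d : Fin p → ℝ) (hr : ∀ j, 0 < r j)
    (hν : StrictMono fun j => d j / r j) :
    (∀ w : Fin p → ℝ, w ≠ 0 →
      (∑ j, w j * ((∑ i, r i) * d j - (∑ i, d i) * r j)) / Real.sqrt (∑ j, (w j) ^ 2 * r j) ≤
        (∑ i, r i) *
          Real.sqrt ((∑ j, (d j / r j) ^ 2 * r j) -
            ((∑ i, d i) / (∑ i, r i)) ^ 2 * (∑ i, r i))) ∧
    (∀ w : Fin p → ℝ, w ≠ 0 →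
      ((∑ j, w j * ((∑ i, r i) * d j - (∑ i, d i) * r j)) / Real.sqrt (∑ j, (w j) ^ 2 * r j) =
          (∑ i, r i) *
            Real.sqrt ((∑ j, (d j / r j) ^ 2 * r j) -
              ((∑ i, d i) / (∑ i, r i)) ^ 2 * (∑ i, r i)) ↔
        ∃ c : ℝ, 0 < c ∧ w = fun j => c * (d j / r j - (∑ i, d i) / (∑ i, r i)))) ∧
    StrictMono (fun j => d j / r j - (∑ i, d i) / (∑ i, r i)) ∧
    IsGreatest
      ((fun w : Fin p → ℝ =>
          (∑ j, w j * ((∑ i, r i) * d j - (∑ i, d i) * r j)) /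
            Real.sqrt (∑ j, (w j) ^ 2 * r j)) '' {w | w ≠ 0})
      ((∑ i, r i) *
        Real.sqrt ((∑ j, (d j / r j) ^ 2 * r j) -
          ((∑ i, d i) / (∑ i, r i)) ^ 2 * (∑ i, r i))) := by
  have hp0 : 0 < p := by omega
  set R : ℝ := ∑ i, r i with hRdef
  set D : ℝ := ∑ i, d i with hDdef
  have hR : 0 < R := Finset.sum_pos (fun i _ => hr i) ⟨⟨0, hp0⟩, Finset.mem_univ _⟩
  set νb : ℝ := D / R with hνbdef
  have hDR : D = νb * R := by rw [hνbdef, div_mul_cancel₀ D hR.ne']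
  -- slopes
  set ν : Fin p → ℝ := fun j => d j / r j with hνdef
  have hd : ∀ j, d j = ν j * r j := fun j => by
    exact (div_mul_cancel₀ (d j) (hr j).ne').symm
  -- the optimal weight vector
  set u : Fin p → ℝ := fun j => ν j - νb with hudef
  have hu_mono : StrictMono u := fun i j hij => by
    simpa [hudef] using sub_lt_sub_right (hν hij) νb
  -- u is not identically zero
  have hur : ∑ j, u j * r j = 0 := by
    simp only [hudef, sub_mul]
    rw [Finset.sum_sub_distrib]
    simp only [← hd]
    rw [← Finset.mul_sum]
    rw [← hDdef, ← hRdef, hDR]; ring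
  have hune : u ≠ 0 := by
    intro h
    have h0 : u ⟨0, by omega⟩ < u ⟨1, by omega⟩ := hu_mono (by simp [Fin.lt_def])
    simp [h] at h0
  -- Euclidean space vectors
  set a : (Fin p → ℝ) → EuclideanSpace ℝ (Fin p) :=
    fun w => WithLp.toLp 2 (fun j => w j * Real.sqrt (r j)) with hadef
  have hrs : ∀ j, Real.sqrt (r j) * Real.sqrt (r j) = r j := fun j =>
    Real.mul_self_sqrt (hr j).le
  have hrsne : ∀ j, Real.sqrt (r j) ≠ 0 := fun j =>
    (Real.sqrt_pos.mpr (hr j)).ne'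
  have hnorm : ∀ w, ‖a w‖ = Real.sqrt (∑ j, (w j) ^ 2 * r j) := by
    intro w
    rw [EuclideanSpace.norm_eq]
    congr 1
    apply Finset.sum_congr rfl
    intro j _
    rw [Real.norm_eq_abs, sq_abs, hadef]
    rw [mul_pow, sq, sq, hrs]
  have hinner : ∀ w v, ⟪a w, a v⟫ = ∑ j, w j * v j * r j := by
    intro w v
    rw [PiLp.inner_apply]
    apply Finset.sum_congr rfl
    intro j _
    simp only [RCLike.inner_apply, conj_trivial, hadef]
    linear_combination (w j * v j) * hrs j
  have hane : ∀ w : Fin p → ℝ, w ≠ 0 → a w ≠ 0 := by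
    intro w hw h
    apply hw
    funext j
    have := congrArg (fun x : EuclideanSpace ℝ (Fin p) => x j) h
    simp only [hadef] at this
    have : w j * Real.sqrt (r j) = 0 := this
    rcases mul_eq_zero.mp this with h' | h'
    · exact h'
    · exact absurd h' (hrsne j)
  have hanorm_pos : ∀ w : Fin p → ℝ, w ≠ 0 → 0 < ‖a w‖ :=
    fun w hw => norm_pos_iff.mpr (hane w hw)
  have hb_pos : 0 < ‖a u‖ := hanorm_pos u hune
  -- numerator identity
  have hL : ∀ w : Fin p → ℝ,
      ∑ j, w j * (R * d j - D * r j) = R * ⟪a w, a u⟫ := by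
    intro w
    rw [hinner, Finset.mul_sum]
    apply Finset.sum_congr rfl
    intro j _
    rw [hd j, hDR, hudef]
    ring
  -- the quantity under the square root on the RHS
  have hS : (∑ j, (ν j) ^ 2 * r j) - νb ^ 2 * R = ⟪a u, a u⟫ := by
    rw [hinner]
    have : ∀ j, u j * u j * r j = ν j ^ 2 * r j - 2 * νb * (ν j * r j) + νb ^ 2 * r j := by
      intro j; simp only [hudef]; ring
    simp only [this]
    rw [Finset.sum_add_distrib, Finset.sum_sub_distrib]
    simp only [← hd]
    rw [← Finset.mul_sum, ← Finset.mul_sum, ← hDdef, ← hRdef, hDR]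
    ring
  have hbnorm : Real.sqrt ((∑ j, (ν j) ^ 2 * r j) - νb ^ 2 * R) = ‖a u‖ := by
    rw [hS, real_inner_self_eq_norm_sq, Real.sqrt_sq (norm_nonneg _)]
  -- main inequality
  have main : ∀ w : Fin p → ℝ, w ≠ 0 →
      (∑ j, w j * (R * d j - D * r j)) / Real.sqrt (∑ j, (w j) ^ 2 * r j) ≤
        R * Real.sqrt ((∑ j, (ν j) ^ 2 * r j) - νb ^ 2 * R) := by
    intro w hw
    rw [hL, ← hnorm, hbnorm, div_le_iff₀ (hanorm_pos w hw)]
    have := real_inner_le_norm (a w) (a u)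
    nlinarith [hanorm_pos w hw, norm_nonneg (a u)]
  -- equality characterization
  have equal : ∀ w : Fin p → ℝ, w ≠ 0 →
      ((∑ j, w j * (R * d j - D * r j)) / Real.sqrt (∑ j, (w j) ^ 2 * r j) =
        R * Real.sqrt ((∑ j, (ν j) ^ 2 * r j) - νb ^ 2 * R) ↔
        ∃ c : ℝ, 0 < c ∧ w = fun j => c * u j) := by
    intro w hw
    rw [hL, ← hnorm, hbnorm]
    constructor
    · intro h
      have hin : ⟪a w, a u⟫ = ‖a w‖ * ‖a u‖ := by
        have hwp := hanorm_pos w hw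
        rw [div_eq_iff hwp.ne'] at h
        have := mul_left_cancel₀ hR.ne' (by linarith : R * ⟪a w, a u⟫ = R * (‖a w‖ * ‖a u‖))
        exact this
      have hcs := inner_eq_norm_mul_iff_real.mp hin
      refine ⟨‖a w‖ / ‖a u‖, div_pos (hanorm_pos w hw) hb_pos, ?_⟩
      funext j
      have := congrArg (fun x : EuclideanSpace ℝ (Fin p) => x j) hcs
      simp only [PiLp.smul_apply, smul_eq_mul, hadef] at this
      have h2 : ‖a u‖ * (w j * Real.sqrt (r j)) = ‖a w‖ * (u j * Real.sqrt (r j)) := this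
      have h3 : ‖a u‖ * w j = ‖a w‖ * u j := by
        have := mul_right_cancel₀ (hrsne j) (by linarith [h2] : ‖a u‖ * w j * Real.sqrt (r j) = ‖a w‖ * u j * Real.sqrt (r j))
        exact this
      field_simp
      linarith [h3]
    · rintro ⟨c, hc, rfl⟩
      have haw : a (fun j => c * u j) = c • a u := by
        ext j
        simp only [hadef, PiLp.smul_apply, smul_eq_mul]
        ring
      rw [haw, inner_smul_left, norm_smul]
      simp only [conj_trivial, RCLike.ofReal_real_eq_id, id_eq, Real.norm_eq_abs,
        abs_of_pos hc]
      rw [real_inner_self_eq_norm_sq]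
      field_simp [hb_pos.ne']
  -- package everything
  refine ⟨main, equal, hu_mono, ?_⟩
  constructor
  · refine ⟨u, hune, ?_⟩
    exact (equal u hune).mpr ⟨1, one_pos, by funext j; simp⟩
  · rintro x ⟨w, hw, rfl⟩
    exact main w hw
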